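/- arXiv:1812.03767 — 2 statements merged into one kernel-verified Lean document; each statement's English description precedes it below -/
import Mathlib

section
/- Let ⟨·,·⟩ : F_q × F_q → F be the symmetric F-bilinear form determined by ⟨|m⟩, |m′⟩⟩ = (q;q)_m δ_{m,m′}. Then for all integers i, j ≥ 0 and all u, v ∈ F_q, ⟨G^j_i u, v⟩ = ⟨u, G^i_j v⟩. (That is, G^j_i = ι(G^i_j) for the anti-automorphism ι of the q-boson algebra with ι(a⁺) = a⁻, ι(a⁻) = a⁺, ι(k) = k.) -/
open scoped Classical

noncomputable section

namespace KOY

/-- `F = ℚ(q)`, the field of rational functions in an indeterminate `q` over `ℚ`. -/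
abbrev Fq : Type := RatFunc ℚ

/-- The indeterminate `q`. -/
def q : Fq := RatFunc.X

/-- `[u] = (q^u - q^{-u})/(q - q⁻¹)`. -/
def qint (u : ℤ) : Fq := (q ^ u - q ^ (-u)) / (q - q⁻¹)

/-- `(z; a)_m = ∏_{k=0}^{m-1} (1 - z a^k)`. -/
def poch {R : Type*} [CommRing R] (z a : R) (m : ℕ) : R :=
  ∏ k ∈ Finset.range m, (1 - z * a ^ k)

/-- The `q`-boson Fock space `⊕_{m ≥ 0} F·|m⟩`. -/
abbrev Fock : Type := ℕ →₀ Fq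

/-- creation operator `a⁺ |m⟩ = |m+1⟩`. -/
def aP : Module.End Fq Fock := Finsupp.lift Fock Fq ℕ fun m => Finsupp.single (m + 1) 1

/-- annihilation operator `a⁻ |m⟩ = (1-q^m)|m-1⟩`. -/
def aM : Module.End Fq Fock :=
  Finsupp.lift Fock Fq ℕ fun m => (1 - q ^ m) • Finsupp.single (m - 1) 1

/-- `k |m⟩ = q^m |m⟩`. -/
def kO : Module.End Fq Fock := Finsupp.lift Fock Fq ℕ fun m => q ^ m • Finsupp.single m 1

/-- The operator `G^j_i` for `i, j ≥ 0` (`i` = lower index, `j` = upper index):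
`G^j_i = (-q;q)_{i+j} Σ_{m=0}^{t} ((q^{-t};q)_m (-q^{-t};q)_m / ((q;q)_m (-q^{-s};q)_m))
  (a⁺)^{(j-i)_+} (q^m k^m) (a⁻)^{(i-j)_+}` with `s = i+j`, `t = min i j`. -/
def GopN (i j : ℕ) : Module.End Fq Fock :=
  poch (-q) q (i + j) •
    ∑ m ∈ Finset.range (min i j + 1),
      (poch (q ^ (-(min i j : ℤ))) q m * poch (-q ^ (-(min i j : ℤ))) q m /
          (poch q q m * poch (-q ^ (-((i : ℤ) + j))) q m)) •
        (aP ^ (j - i) * (q ^ m • kO ^ m) * aM ^ (i - j))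

/-- `G^j_i` with the convention that it vanishes for negative indices. -/
def Gop (i j : ℤ) : Module.End Fq Fock :=
  if 0 ≤ i ∧ 0 ≤ j then GopN i.toNat j.toNat else 0

/-- `X_{mm}`: the coefficient of `|m⟩` in `X |m⟩`. -/
def elem (X : Module.End Fq Fock) (m : ℕ) : Fq := X (Finsupp.single m 1) m

/-- `⟨a, b⟩ = ∑_{i<j} a_i b_j` (natural numbers). -/
def innN {n : ℕ} (a b : Fin n → ℕ) : ℕ := ∑ i, ∑ j, if i < j then a i * b j else 0

/-- `⟨a, b⟩ = ∑_{i<j} a_i b_j` (integers). -/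
def innZ {n : ℕ} (a b : Fin n → ℤ) : ℤ := ∑ i, ∑ j, if i < j then a i * b j else 0

/-- `|a| = ∑ a_i`. -/
def asum {k : ℕ} (a : Fin k → ℤ) : ℤ := ∑ i, a i

/-- coercion of arrays to integer arrays. -/
def castZ {n : ℕ} (a : Fin n → ℕ) : Fin n → ℤ := fun i => (a i : ℤ)

/-- The matrix product formula for `K^{(n,l)}(z)^γ_α` as a power series in `t = z⁻¹`:
`q^{⟨γ,α⟩} (q^{-l}t;q)_{l+1} ((q²;q²)_l (-qt;q)_l)⁻¹ Σ_{m≥0} q^{-lm} t^m (G^{γ₁}_{α₁}⋯G^{γₙ}_{αₙ})_{mm}`,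
with coefficients transported along a ring hom `f` from `ℚ(q)`. -/
def KmatPS {K : Type*} [Field K] (f : Fq →+* K) (n l : ℕ) (α γ : Fin n → ℕ) :
    PowerSeries K :=
  PowerSeries.C (R := K) (f (q ^ innN γ α)) *
    poch (PowerSeries.C (R := K) (f (q ^ (-(l : ℤ)))) * PowerSeries.X) (PowerSeries.C (R := K) (f q)) (l + 1) *
    (PowerSeries.C (R := K) (f (poch (q ^ 2) (q ^ 2) l)) *
        poch (PowerSeries.C (R := K) (f (-q)) * PowerSeries.X) (PowerSeries.C (R := K) (f q)) l)⁻¹ *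
    PowerSeries.mk fun m =>
      f (q ^ (-(l * m : ℤ)) * elem (List.ofFn fun i => Gop (α i) (γ i)).prod m)

/-- `F((t))`, the field of formal Laurent series in `t`. -/
abbrev LS : Type := LaurentSeries Fq

/-- `K^{(n,l)}(z)^γ_α ∈ F((t))` (first array = lower index `α`, second = upper index `γ`). -/
def Kmat (n l : ℕ) (α γ : Fin n → ℕ) : LS :=
  HahnSeries.ofPowerSeries ℤ Fq (KmatPS (RingHom.id Fq) n l α γ)

/-- Extension of `Kmat` to integer arrays, vanishing if some entry is negative. -/
def KmatZ (n l : ℕ) (α γ : Fin n → ℤ) : LS :=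
  if (∀ i, 0 ≤ α i) ∧ ∀ i, 0 ≤ γ i then
    Kmat n l (fun i => (α i).toNat) fun i => (γ i).toNat
  else 0

/-- `t ∈ F((t))`. -/
def T : LS := HahnSeries.single (1 : ℤ) (1 : Fq)

/-- the constant embedding `F → F((t))`. -/
def CL : Fq →+* LS := HahnSeries.C

/-- `Φ̄_q(γ|β; λ, μ)` for integer arrays, vanishing unless `0 ≤ γ ≤ β`. -/
def phiBarP {K : Type*} [Field K] (qv lam mu : K) {k : ℕ} (γ β : Fin k → ℤ) : K :=
  if ∀ i, 0 ≤ γ i ∧ γ i ≤ β i then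
    poch lam qv (asum γ).toNat * poch (mu / lam) qv (asum β - asum γ).toNat /
        poch mu qv (asum β).toNat *
      ∏ i, poch qv qv (β i).toNat / (poch qv qv (β i - γ i).toNat * poch qv qv (γ i).toNat)
  else 0

/-- `Φ_q(γ|β; λ, μ) = q^{⟨β-γ,γ⟩} (μ/λ)^{|γ|} Φ̄_q(γ|β; λ, μ)`. -/
def phiP {K : Type*} [Field K] (qv lam mu : K) {k : ℕ} (γ β : Fin k → ℤ) : K :=
  qv ^ innZ (β - γ) γ * (mu / lam) ^ asum γ * phiBarP qv lam mu γ β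

/-- truncation `ᾱ = (α₁, …, α_{n-1})` (as an integer array). -/
def bar {n : ℕ} (a : Fin n → ℕ) : Fin (n - 1) → ℤ :=
  fun i => (a ⟨i.val, by have := i.isLt; omega⟩ : ℤ)

/-- `A^{(l,m)}(z)^{γ,δ}_{α,β}
  = q^{⟨α,β⟩-⟨δ,γ⟩} Σ_{ξ̄+η̄=γ̄+δ̄} Φ_{q²}(ξ̄-δ̄|ξ̄; q^{m-l}z, q^{-l-m}z) Φ_{q²}(η̄|β̄; q^{-l-m}z⁻¹, q^{-2m})`
in any field, for chosen values of `q` and `z`. -/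
def Amat {K : Type*} [Field K] (qv zv : K) {n : ℕ} (l m : ℕ) (γ δ α β : Fin n → ℕ) : K :=
  qv ^ ((innN α β : ℤ) - (innN δ γ : ℤ)) *
    ∑ ξ ∈ Finset.Icc (0 : Fin (n - 1) → ℤ) (bar γ + bar δ),
      phiP (qv ^ 2) (qv ^ ((m : ℤ) - l) * zv) (qv ^ (-(l : ℤ) - m) * zv) (ξ - bar δ) ξ *
        phiP (qv ^ 2) (qv ^ (-(l : ℤ) - m) * zv⁻¹) (qv ^ (-(2 * m : ℤ))) (bar γ + bar δ - ξ)
          (bar β)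

/-- `𝒮(λ,μ)^{γ,δ}_{α,β} = θ(γ+δ=α+β) q^{⟨β-γ,γ⟩+⟨α,β-γ⟩+|α||β|-|γ||δ|} λ^{2(|δ|-|α|)}
  Φ̄_{q²}(α|δ; λ², μ²)`, the parametric `R` matrix element. -/
def Smat {K : Type*} [Field K] (qv lam mu : K) {k : ℕ} (γ δ α β : Fin k → ℕ) : K :=
  if γ + δ = α + β then
    qv ^ (innZ (castZ β - castZ γ) (castZ γ) + innZ (castZ α) (castZ β - castZ γ) +
          (asum (castZ α) * asum (castZ β) - asum (castZ γ) * asum (castZ δ))) *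
      lam ^ (2 * (asum (castZ δ) - asum (castZ α))) *
      phiBarP (qv ^ 2) (lam ^ 2) (mu ^ 2) (castZ α) (castZ δ)
  else 0

/-- reversal `ρ(a) = (a_n, …, a_1)`. -/
def rev {n : ℕ} {M : Type*} (a : Fin n → M) : Fin n → M := fun i => a i.rev

/-- cyclic shift `σ(a) = (a_2, …, a_n, a_1)`. -/
def cyc {n : ℕ} {M : Type*} (a : Fin n → M) : Fin n → M :=
  fun i => a ⟨(i.val + 1) % n, Nat.mod_lt _ (by have := i.isLt; omega)⟩

/-- the cyclic successor on `Fin n`. -/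
def nxt {n : ℕ} (i : Fin n) : Fin n :=
  ⟨(i.val + 1) % n, Nat.mod_lt _ (by have := i.isLt; omega)⟩

/-- deletion of the `i`-th entry of an array. -/
def del {n : ℕ} (i : Fin n) (a : Fin n → ℕ) : Fin (n - 1) → ℕ :=
  fun j =>
    if (j : ℕ) < (i : ℕ) then a ⟨j, by have := j.isLt; omega⟩
    else a ⟨(j : ℕ) + 1, by have := j.isLt; omega⟩

/-- the `q²`-binomial coefficient `binom(b, c)_{q²}` as an element of `ℚ(q)`. -/
def qbinom2 (b c : ℕ) : Fq :=
  poch (q ^ 2) (q ^ 2) b / (poch (q ^ 2) (q ^ 2) (b - c) * poch (q ^ 2) (q ^ 2) c)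

/-- `ℚ(q)(z) = ℚ(q, z)`. -/
abbrev Fqz : Type := RatFunc Fq

/-- the image of `q` in `ℚ(q, z)`. -/
def qz : Fqz := RatFunc.C q

/-- the indeterminate `z` in `ℚ(q, z)`. -/
def zz : Fqz := RatFunc.X

/-- the symmetric bilinear form on the Fock space with `⟨|m⟩, |m'⟩⟩ = (q;q)_m δ_{m,m'}`. -/
def form (u v : Fock) : Fq := u.sum fun m c => c * poch q q m * v m

lemma form_zero_left (v : Fock) : form 0 v = 0 := by simp [form]

lemma form_zero_right (u : Fock) : form u 0 = 0 := by simp [form]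

lemma form_add_left (u u' v : Fock) : form (u + u') v = form u v + form u' v := by
  unfold form
  refine Finsupp.sum_add_index' (fun m => ?_) (fun m c c' => ?_) <;> ring

lemma form_smul_left (c : Fq) (u v : Fock) : form (c • u) v = c * form u v := by
  unfold form
  rw [Finsupp.sum_smul_index (fun m => by ring), Finsupp.mul_sum]
  exact Finsupp.sum_congr fun m _ => by ring

lemma form_add_right (u v v' : Fock) : form u (v + v') = form u v + form u v' := by
  unfold form
  rw [← Finsupp.sum_add]
  exact Finsupp.sum_congr fun m _ => by simp; ring

lemma form_smul_right (c : Fq) (u v : Fock) : form u (c • v) = c * form u v := by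
  unfold form
  rw [Finsupp.mul_sum]
  exact Finsupp.sum_congr fun m _ => by simp; ring

lemma form_sum_left {ι : Type*} (s : Finset ι) (w : ι → Fock) (v : Fock) :
    form (∑ i ∈ s, w i) v = ∑ i ∈ s, form (w i) v := by
  induction s using Finset.cons_induction with
  | empty => simp [form_zero_left]
  | cons a s ha ih => rw [Finset.sum_cons, Finset.sum_cons, form_add_left, ih]

lemma form_sum_right {ι : Type*} (s : Finset ι) (w : ι → Fock) (u : Fock) :
    form u (∑ i ∈ s, w i) = ∑ i ∈ s, form u (w i) := by
  induction s using Finset.cons_induction with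
  | empty => simp [form_zero_right]
  | cons a s ha ih => rw [Finset.sum_cons, Finset.sum_cons, form_add_right, ih]

/-- `Y` is the adjoint of `X` with respect to `form`. -/
def Adj (X Y : Module.End Fq Fock) : Prop := ∀ u v, form (X u) v = form u (Y v)

lemma Adj.smul {X Y : Module.End Fq Fock} (c : Fq) (h : Adj X Y) : Adj (c • X) (c • Y) := by
  intro u v
  simp only [LinearMap.smul_apply, form_smul_left, form_smul_right, h u v]

lemma Adj.sum {ι : Type*} (s : Finset ι) (X Y : ι → Module.End Fq Fock)
    (h : ∀ i ∈ s, Adj (X i) (Y i)) : Adj (∑ i ∈ s, X i) (∑ i ∈ s, Y i) := by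
  intro u v
  simp only [LinearMap.sum_apply, form_sum_left, form_sum_right]
  exact Finset.sum_congr rfl fun i hi => h i hi u v

lemma Adj.mul {X X' Y Y' : Module.End Fq Fock} (h1 : Adj X X') (h2 : Adj Y Y') :
    Adj (X * Y) (Y' * X') := by
  intro u v
  simp only [Module.End.mul_apply]
  rw [h1, h2]

lemma Adj.pow {X Y : Module.End Fq Fock} (h : Adj X Y) (n : ℕ) : Adj (X ^ n) (Y ^ n) := by
  induction n with
  | zero => intro u v; simp
  | succ n ih =>
      rw [pow_succ X, pow_succ' Y]
      exact ih.mul h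

lemma adj_of_single {X Y : Module.End Fq Fock}
    (h : ∀ m m', form (X (Finsupp.single m 1)) (Finsupp.single m' 1) =
      form (Finsupp.single m 1) (Y (Finsupp.single m' 1))) : Adj X Y := by
  intro u v
  induction u using Finsupp.induction_linear with
  | zero => simp [form_zero_left, form_zero_right]
  | add f g hf hg => rw [map_add, form_add_left, form_add_left, hf, hg]
  | single m c =>
      induction v using Finsupp.induction_linear with
      | zero => simp [form_zero_left, form_zero_right]
      | add f g hf hg => rw [map_add, form_add_right, form_add_right, hf, hg]
      | single m' c' =>
          rw [show Finsupp.single m c = c • Finsupp.single m (1 : Fq) by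
                rw [Finsupp.smul_single', mul_one],
              show Finsupp.single m' c' = c' • Finsupp.single m' (1 : Fq) by
                rw [Finsupp.smul_single', mul_one],
              map_smul, map_smul, form_smul_left, form_smul_left, form_smul_right,
              form_smul_right, h m m']

lemma aP_single (m : ℕ) : aP (Finsupp.single m (1 : Fq)) = Finsupp.single (m + 1) 1 := by
  simp [aP, Finsupp.lift_apply, Finsupp.sum_single_index]

lemma aM_single (m : ℕ) :
    aM (Finsupp.single m (1 : Fq)) = (1 - q ^ m) • Finsupp.single (m - 1) 1 := by
  simp [aM, Finsupp.lift_apply, Finsupp.sum_single_index]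

lemma kO_single (m : ℕ) : kO (Finsupp.single m (1 : Fq)) = q ^ m • Finsupp.single m 1 := by
  rw [kO, Finsupp.lift_apply, Finsupp.sum_single_index (by rw [zero_smul]), one_smul]

lemma form_single_single (m m' : ℕ) (c c' : Fq) :
    form (Finsupp.single m c) (Finsupp.single m' c') =
      c * poch q q m * (if m' = m then c' else 0) := by
  unfold form
  rw [Finsupp.sum_single_index (by ring)]
  simp [Finsupp.single_apply]

lemma poch_succ {R : Type*} [CommRing R] (z a : R) (m : ℕ) :
    poch z a (m + 1) = poch z a m * (1 - z * a ^ m) :=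
  Finset.prod_range_succ _ _

lemma adj_aP_aM : Adj aP aM := by
  refine adj_of_single fun m m' => ?_
  rw [aP_single, aM_single, form_smul_right, form_single_single, form_single_single]
  cases m' with
  | zero => simp
  | succ k =>
      by_cases hk : k = m
      · subst hk
        simp only [Nat.add_sub_cancel, if_pos rfl, poch_succ]
        ring_nf
      · rw [if_neg (by omega), if_neg (by omega)]
        ring

lemma adj_aM_aP : Adj aM aP := by
  refine adj_of_single fun m m' => ?_
  rw [aP_single, aM_single, form_smul_left, form_single_single, form_single_single]
  cases m with
  | zero => simp
  | succ k =>
      by_cases hk : k = m'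
      · subst hk
        simp only [Nat.add_sub_cancel, if_pos rfl, poch_succ]
        ring_nf
      · rw [if_neg (by omega), if_neg (by omega)]
        ring

lemma adj_kO : Adj kO kO := by
  refine adj_of_single fun m m' => ?_
  rw [kO_single, kO_single, form_smul_left, form_smul_right, form_single_single]
  by_cases h : m' = m
  · subst h; ring
  · rw [if_neg h]; ring

lemma Adj.mul3 {A A' B B' C C' : Module.End Fq Fock}
    (hA : Adj A A') (hB : Adj B B') (hC : Adj C C') : Adj (A * B * C) (C' * (B' * A')) := by
  intro u v
  simp only [Module.End.mul_apply]
  exact (hA _ _).trans ((hB _ _).trans (hC _ _))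

set_option maxHeartbeats 1000000 in
lemma adjN (i j : ℕ) : Adj (GopN i j) (GopN j i) := by
  unfold GopN
  rw [Nat.min_comm j i, Nat.add_comm j i,
    show (j : ℤ) + (i : ℤ) = (i : ℤ) + j from add_comm _ _,
    show ((j : ℤ) ⊓ (i : ℤ)) = (i : ℤ) ⊓ j from min_comm _ _]
  refine Adj.smul _ ?_
  refine Adj.sum _ _ _ fun m _ => ?_
  refine Adj.smul _ ?_
  have := Adj.mul3 (adj_aP_aM.pow (j - i)) (Adj.smul (q ^ m) (adj_kO.pow m))
    (adj_aM_aP.pow (i - j))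
  rwa [← mul_assoc] at this

/-- `⟨G^j_i u, v⟩ = ⟨u, G^i_j v⟩`. -/
theorem statement3 (i j : ℕ) (u v : Fock) :
    form (Gop i j u) v = form u (Gop j i v) := by
  have h1 : Gop i j = GopN i j := by
    simp [Gop]
  have h2 : Gop j i = GopN j i := by
    simp [Gop]
  rw [h1, h2]
  exact adjN i j u v

end KOY
end
end

section
/- Fix integers n ≥ 3 and l ≥ 0, let α, γ ∈ B^{(n)}_l and suppose α_i = γ_i = 0 for some i ∈ {1, …, n}. Let α^{(i)}, γ^{(i)} ∈ B^{(n−1)}_l denote the arrays obtained from α, γ by deleting the i-th component. Then K^{(n,l)}(z)^γ_α = K^{(n−1,l)}(z)^{γ^{(i)}}_{α^{(i)}} in F((t)). -/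
open scoped Classical

noncomputable section

namespace KOY

lemma poch_zero {R : Type*} [CommRing R] (z a : R) : poch z a 0 = 1 := by
  simp [poch]

lemma GopN_zero_zero : GopN 0 0 = 1 := by
  rw [GopN]
  simp only [Nat.min_self, Nat.add_zero, zero_add, Finset.sum_range_one, poch_zero, pow_zero,
    one_mul, mul_one, div_one, Nat.sub_self, one_smul]

lemma Gop_zero_zero : Gop 0 0 = 1 := by
  rw [Gop, if_pos ⟨le_refl 0, le_refl 0⟩]
  exact GopN_zero_zero

lemma del_eq {m : ℕ} (i : Fin (m + 1)) (a : Fin (m + 1) → ℕ) (j : Fin m) :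
    del i a j = a (i.succAbove j) := by
  unfold del Fin.succAbove
  rcases lt_or_ge (j.val) (i.val) with h | h
  · rw [if_pos h, if_pos (by simpa [Fin.lt_def] using h)]
    congr 1
  · rw [if_neg (not_lt.2 h), if_neg (by simpa [Fin.lt_def] using h)]
    congr 1

lemma innN_del {m : ℕ} (i : Fin (m + 1)) (a b : Fin (m + 1) → ℕ)
    (ha : a i = 0) (hb : b i = 0) : innN (del i a) (del i b) = innN a b := by
  unfold innN
  rw [Fin.sum_univ_succAbove (fun x => ∑ j, if x < j then a x * b j else 0) i]
  simp only [ha, zero_mul, ite_self, Finset.sum_const_zero, zero_add]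
  refine Finset.sum_congr rfl fun i' _ => ?_
  rw [Fin.sum_univ_succAbove
    (fun j => if i.succAbove i' < j then a (i.succAbove i') * b j else 0) i]
  simp only [hb, mul_zero, ite_self, zero_add]
  refine Finset.sum_congr rfl fun j' _ => ?_
  rw [del_eq, del_eq]
  exact if_congr Fin.succAbove_lt_succAbove_iff.symm rfl rfl

lemma prod_ofFn_succAbove {M : Type*} [Monoid M] :
    ∀ {m : ℕ} (g : Fin (m + 1) → M) (p : Fin (m + 1)), g p = 1 →
      (List.ofFn g).prod = (List.ofFn (g ∘ p.succAbove)).prod := by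
  intro m
  induction m with
  | zero =>
    intro g p h
    have hp : p = 0 := Fin.eq_zero p
    subst hp
    simp [List.ofFn_succ, h]
  | succ m ih =>
    intro g p h
    cases p using Fin.cases with
    | zero =>
      simp only [Fin.succAbove_zero]
      rw [List.ofFn_succ]
      simp only [h, List.prod_cons, one_mul]
      rfl
    | succ p =>
      have key : List.ofFn (g ∘ (p.succ).succAbove) =
          g 0 :: List.ofFn ((g ∘ Fin.succ) ∘ p.succAbove) := by
        rw [List.ofFn_succ]
        simp [Function.comp_def, Fin.succ_succAbove_zero, Fin.succ_succAbove_succ]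
      rw [key, List.ofFn_succ (f := g), List.prod_cons, List.prod_cons]
      congr 1
      exact ih (g ∘ Fin.succ) p h

/-- rank reduction `K^{(n,l)}(z)^γ_α = K^{(n-1,l)}(z)^{γ^{(i)}}_{α^{(i)}}`
when `α_i = γ_i = 0`. -/
theorem statement6 (n l : ℕ) (hn : 3 ≤ n) (α γ : Fin n → ℕ)
    (hα : ∑ i, α i = l) (hγ : ∑ i, γ i = l)
    (i : Fin n) (hαi : α i = 0) (hγi : γ i = 0) :
    Kmat n l α γ = Kmat (n - 1) l (del i α) (del i γ) := by
  obtain ⟨m, rfl⟩ : ∃ m, n = m + 1 := ⟨n - 1, by omega⟩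
  have hprod : (List.ofFn fun j : Fin (m + 1) => Gop (α j) (γ j)).prod =
      (List.ofFn fun j : Fin m => Gop (del i α j) (del i γ j)).prod := by
    have h1 : (fun j : Fin m => Gop (del i α j) (del i γ j)) =
        (fun j : Fin (m + 1) => Gop (α j) (γ j)) ∘ i.succAbove := by
      funext j
      simp [del_eq]
    rw [h1]
    exact prod_ofFn_succAbove _ i (by simp [hαi, hγi, Gop_zero_zero])
  unfold Kmat KmatPS
  rw [innN_del i γ α hγi hαi, hprod]
  rfl

end KOY
end
end
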